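/- Let A be a real 2×2 matrix with (tr A)² − 4 det A > 0 and det A > 0 (a linear vector field with a hyperbolic singularity of node type at the origin: two distinct real nonzero eigenvalues of the same sign). Then there exist a real orthogonal 2×2 matrix P, constants C > 0, E > 0, and φ ∈ ℝ with cos(2φ) > 0 (i.e. φ ∈ (−π/4, π/4) mod π) such that for every θ ∈ ℝ, (Pᵀ A P) applied to the vector (E·cos θ, sin θ) equals C·(E·cos(θ−φ), sin(θ+φ)). -/

import Mathlib

open Real Matrix

lemma exists_angle (x y : ℝ) (h : x ^ 2 + y ^ 2 = 1) :
    ∃ φ : ℝ, Real.cos φ = x ∧ Real.sin φ = y := by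
  set z : ℂ := ⟨x, y⟩ with hz
  have habs : ‖z‖ = 1 := by
    rw [Complex.norm_def, Complex.normSq_mk]
    rw [show x * x + y * y = 1 by nlinarith]
    exact Real.sqrt_one
  have hz0 : z ≠ 0 := by
    intro h0; rw [h0] at habs; simp at habs
  refine ⟨z.arg, ?_, ?_⟩
  · rw [Complex.cos_arg hz0, habs]; simp [hz]
  · rw [Complex.sin_arg, habs]; simp [hz]

lemma exists_u (x y : ℝ) : ∃ u : ℝ, x * Real.cos u + y * Real.sin u = 0 := by
  rcases eq_or_ne x 0 with hx | hx
  · exact ⟨0, by simp [hx]⟩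
  · set z : ℂ := ⟨y, -x⟩ with hz
    have hz0 : z ≠ 0 := by
      intro h0
      rw [Complex.ext_iff] at h0
      simp [hz] at h0
      exact hx h0.2
    have hm : ‖z‖ ≠ 0 := by simpa using hz0
    refine ⟨z.arg, ?_⟩
    rw [Complex.cos_arg hz0, Complex.sin_arg]
    simp only [hz]
    field_simp
    ring


lemma mat2_eq {w x y z w' x' y' z' : ℝ} (h1 : w = w') (h2 : x = x') (h3 : y = y')
    (h4 : z = z') : !![w, x; y, z] = !![w', x'; y', z'] := by
  subst h1 h2 h3 h4; rfl

lemma mulVec_fin_two (w x y z v0 v1 : ℝ) :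
    (!![w, x; y, z]).mulVec ![v0, v1] = ![w * v0 + x * v1, y * v0 + z * v1] := by
  funext i
  fin_cases i <;> simp [Matrix.mulVec, Matrix.vec2_dotProduct]

/-- A real 2×2 matrix with two distinct real nonzero eigenvalues of the
same sign (node) admits an orthonormal basis in which it takes the node normal form. -/
theorem node_normal_form (A : Matrix (Fin 2) (Fin 2) ℝ)
    (hdisc : 0 < (A.trace) ^ 2 - 4 * A.det) (hdet : 0 < A.det) :
    ∃ (P : Matrix (Fin 2) (Fin 2) ℝ) (C E φ : ℝ),
      Pᵀ * P = 1 ∧ 0 < C ∧ 0 < E ∧ 0 < cos (2 * φ) ∧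
      ∀ θ : ℝ, (Pᵀ * A * P).mulVec ![E * cos θ, sin θ]
        = C • ![E * cos (θ - φ), sin (θ + φ)] := by
  obtain ⟨p, q, r, s, hA⟩ : ∃ p q r s : ℝ, A = !![p, q; r, s] :=
    ⟨A 0 0, A 0 1, A 1 0, A 1 1, by ext i j; fin_cases i <;> fin_cases j <;> rfl⟩
  subst hA
  rw [Matrix.trace_fin_two_of] at hdisc
  rw [Matrix.det_fin_two_of] at hdisc hdet
  obtain ⟨u, hu⟩ := exists_u (p - s) (q + r)
  obtain ⟨c0, s0, hone, hcu, hsu⟩ : ∃ c0 s0 : ℝ, c0 ^ 2 + s0 ^ 2 = 1 ∧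
      Real.cos u = c0 ^ 2 - s0 ^ 2 ∧ Real.sin u = 2 * c0 * s0 := by
    refine ⟨Real.cos (u / 2), Real.sin (u / 2),
      by rw [add_comm]; exact Real.sin_sq_add_cos_sq _, ?_, ?_⟩
    · have h := Real.cos_two_mul' (u / 2)
      rw [show 2 * (u / 2) = u by ring] at h
      exact h
    · have h := Real.sin_two_mul (u / 2)
      rw [show 2 * (u / 2) = u by ring] at h
      rw [h]; ring
  rw [hcu, hsu] at hu
  set a : ℝ := (p + s) / 2 with ha
  set b : ℝ := q * c0 ^ 2 + (s - p) * c0 * s0 - r * s0 ^ 2 with hbdef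
  set c : ℝ := r * c0 ^ 2 + (s - p) * c0 * s0 - q * s0 ^ 2 with hcdef
  set P : Matrix (Fin 2) (Fin 2) ℝ := !![c0, -s0; s0, c0] with hP
  have hPT : Pᵀ = !![c0, s0; -s0, c0] := by
    rw [hP]; ext i j; fin_cases i <;> fin_cases j <;> rfl
  have hPo : Pᵀ * P = 1 := by
    rw [hPT, hP, Matrix.mul_fin_two, Matrix.one_fin_two]
    exact mat2_eq (by nlinarith) (by ring) (by ring) (by nlinarith)
  have hBeq : Pᵀ * !![p, q; r, s] * P = !![a, b; c, a] := by
    rw [hPT, hP, Matrix.mul_fin_two, Matrix.mul_fin_two]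
    refine mat2_eq ?_ (by rw [hbdef]; ring) (by rw [hcdef]; ring) ?_
    · rw [ha]; linear_combination (1/2) * hu + ((p + s)/2) * hone
    · rw [ha]; linear_combination (-1/2) * hu + ((p + s)/2) * hone
  have hbc : b * c = a ^ 2 - (p * s - q * r) := by
    have hdP : (!![c0, -s0; s0, c0] : Matrix (Fin 2) (Fin 2) ℝ).det = 1 := by
      rw [Matrix.det_fin_two_of]; nlinarith
    have h5 : (Pᵀ * !![p, q; r, s] * P).det = (!![p, q; r, s] : Matrix (Fin 2) (Fin 2) ℝ).det := by
      rw [Matrix.det_mul, Matrix.det_mul, Matrix.det_transpose, hP, hdP]; ring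
    rw [hBeq, Matrix.det_fin_two_of, Matrix.det_fin_two_of] at h5
    linear_combination -h5
  have hbcpos : 0 < b * c := by rw [hbc, ha]; nlinarith
  have hbcdiv : 0 < b / c := by
    rcases mul_pos_iff.mp hbcpos with ⟨h1, h2⟩ | ⟨h1, h2⟩
    · exact div_pos h1 h2
    · exact div_pos_of_neg_of_neg h1 h2
  have hcne : c ≠ 0 := by
    intro h0; rw [h0, mul_zero] at hbcpos; exact lt_irrefl 0 hbcpos
  obtain ⟨E, hEpos, hE2⟩ : ∃ E : ℝ, 0 < E ∧ E ^ 2 = b / c :=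
    ⟨Real.sqrt (b / c), Real.sqrt_pos.mpr hbcdiv, Real.sq_sqrt hbcdiv.le⟩
  have hEne : E ≠ 0 := ne_of_gt hEpos
  have hE2' : c * E ^ 2 = b := by rw [hE2]; field_simp
  have hCsq_pos : 0 < a ^ 2 + b * c := by positivity
  obtain ⟨C, hCpos, hC2⟩ : ∃ C : ℝ, 0 < C ∧ C ^ 2 = a ^ 2 + b * c :=
    ⟨Real.sqrt (a ^ 2 + b * c), Real.sqrt_pos.mpr hCsq_pos, Real.sq_sqrt hCsq_pos.le⟩
  have hCne : C ≠ 0 := ne_of_gt hCpos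
  clear_value a b c
  obtain ⟨φ, hφc, hφs⟩ := exists_angle (a / C) (b / (C * E)) (by
    field_simp
    linear_combination (-E ^ 2) * hC2 + (-b) * hE2')
  refine ⟨P, C, E, φ, hPo, hCpos, hEpos, ?_, ?_⟩
  · rw [Real.cos_two_mul, hφc]
    have h1 : 2 * (a / C) ^ 2 - 1 = (a ^ 2 - b * c) / C ^ 2 := by
      field_simp; linear_combination -hC2
    rw [h1, hbc, show a ^ 2 - (a ^ 2 - (p * s - q * r)) = p * s - q * r by ring]
    positivity
  · intro θ
    have hCc : C * Real.cos φ = a := by rw [hφc]; field_simp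
    have hCEs : C * E * Real.sin φ = b := by rw [hφs]; field_simp
    have hCs : C * Real.sin φ = c * E := by
      rw [hφs]; field_simp; linear_combination (-1) * hE2'
    rw [hBeq, _root_.mulVec_fin_two, Real.cos_sub, Real.sin_add, Matrix.smul_vec2]
    refine Matrix.vec2_eq ?_ ?_
    · rw [smul_eq_mul]
      linear_combination (-(E * Real.cos θ)) * hCc + (-(Real.sin θ)) * hCEs
    · rw [smul_eq_mul]
      linear_combination (-(Real.sin θ)) * hCc + (-(Real.cos θ)) * hCs
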